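/- Let M be an orthogonal projection (Hermitian matrix with M * M = M) over ℂ indexed by (Fin dA × Fin dB), and let 0 < α ≤ 1 be a real number such that ‖M^Γ‖ ≤ h_SEP(M)^α (real power). Then for every n ≥ 1 and all Euclidean-unit vectors a : (Fin n → Fin dA) → ℂ and b : (Fin n → Fin dB) → ℂ, Re ⟪a ⊗ b, (M^{⊗n}).mulVec (a ⊗ b)⟫ ≤ h_SEP(M)^(α·n). (That is, M's channel obeys weak ∞-norm multiplicativity with exponent α: h_SEP(M^{⊗n}) ≤ h_SEP(M)^{αn}.) -/

import Mathlib

open Matrix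

noncomputable section

/-- Partial transpose on the second tensor factor. -/
def ptrans {α β : Type*} (X : Matrix (α × β) (α × β) ℂ) : Matrix (α × β) (α × β) ℂ :=
  fun p q => X (p.1, q.2) (q.1, p.2)

/-- L2 (Euclidean) operator norm of a matrix: the largest singular value. -/
def opNorm {n : Type*} [Fintype n] [DecidableEq n] (X : Matrix n n ℂ) : ℝ :=
  ‖Matrix.toEuclideanCLM (𝕜 := ℂ) X‖

/-- Maximum overlap of `M` with separable (product) states. -/
def hSEP {dA dB : ℕ} (M : Matrix (Fin dA × Fin dB) (Fin dA × Fin dB) ℂ) : ℝ :=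
  sSup { x : ℝ | ∃ (a : EuclideanSpace ℂ (Fin dA)) (b : EuclideanSpace ℂ (Fin dB)),
    ‖a‖ = 1 ∧ ‖b‖ = 1 ∧
    x = (star (fun p : Fin dA × Fin dB => a p.1 * b p.2) ⬝ᵥ
          M.mulVec (fun p : Fin dA × Fin dB => a p.1 * b p.2)).re }

/-- `n`-th tensor power of a bipartite matrix. -/
def tensPow {dA dB : ℕ} (M : Matrix (Fin dA × Fin dB) (Fin dA × Fin dB) ℂ) (n : ℕ) :
    Matrix ((Fin n → Fin dA) × (Fin n → Fin dB)) ((Fin n → Fin dA) × (Fin n → Fin dB)) ℂ :=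
  fun p q => ∏ i : Fin n, M (p.1 i, p.2 i) (q.1 i, q.2 i)

/-! ### Auxiliary lemmas -/

/-- Sum of squared norms of the entries of a vector (the squared Euclidean norm). -/
def sumSq {ι : Type*} [Fintype ι] (v : ι → ℂ) : ℝ := ∑ i, ‖v i‖ ^ 2

lemma sumSq_nonneg {ι : Type*} [Fintype ι] (v : ι → ℂ) : 0 ≤ sumSq v :=
  Finset.sum_nonneg fun _ _ => sq_nonneg _

lemma norm_symm {ι : Type*} [Fintype ι] (v : ι → ℂ) :
    ‖(WithLp.equiv 2 (ι → ℂ)).symm v‖ = Real.sqrt (sumSq v) := by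
  rw [EuclideanSpace.norm_eq]; rfl

lemma re_dot_le {ι : Type*} [Fintype ι] (u w : ι → ℂ) :
    (star u ⬝ᵥ w).re ≤ Real.sqrt (sumSq u) * Real.sqrt (sumSq w) := by
  have h := norm_inner_le_norm (𝕜 := ℂ) ((WithLp.equiv 2 (ι → ℂ)).symm u)
    ((WithLp.equiv 2 (ι → ℂ)).symm w)
  rw [norm_symm, norm_symm, WithLp.equiv_symm_apply, EuclideanSpace.inner_toLp_toLp,
    dotProduct_comm] at h
  exact le_trans (Complex.re_le_norm _) h

lemma sumSq_mulVec_le {ι : Type*} [Fintype ι] [DecidableEq ι] (X : Matrix ι ι ℂ) (w : ι → ℂ) :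
    sumSq (X *ᵥ w) ≤ opNorm X ^ 2 * sumSq w := by
  have h : ‖toEuclideanCLM (𝕜 := ℂ) X ((WithLp.equiv 2 (ι → ℂ)).symm w)‖ ≤
      opNorm X * ‖(WithLp.equiv 2 (ι → ℂ)).symm w‖ :=
    (toEuclideanCLM (𝕜 := ℂ) X).le_opNorm _
  rw [norm_symm, WithLp.equiv_symm_apply, toEuclideanCLM_toLp, ← WithLp.equiv_symm_apply,
    norm_symm] at h
  calc sumSq (X *ᵥ w) = Real.sqrt (sumSq (X *ᵥ w)) ^ 2 := (Real.sq_sqrt (sumSq_nonneg _)).symm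
    _ ≤ (opNorm X * Real.sqrt (sumSq w)) ^ 2 := by
        apply pow_le_pow_left₀ (Real.sqrt_nonneg _) h
    _ = opNorm X ^ 2 * sumSq w := by rw [mul_pow, Real.sq_sqrt (sumSq_nonneg _)]

lemma sumSq_prod {ι κ : Type*} [Fintype ι] [Fintype κ] (u : ι → ℂ) (v : κ → ℂ) :
    sumSq (fun p : ι × κ => u p.1 * v p.2) = sumSq u * sumSq v := by
  simp [sumSq, Fintype.sum_prod_type, norm_mul, mul_pow, ← Finset.mul_sum, ← Finset.sum_mul]

lemma sumSq_of_norm_one {ι : Type*} [Fintype ι] (x : EuclideanSpace ℂ ι) (hx : ‖x‖ = 1) :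
    sumSq (fun i => x i) = 1 := by
  have h : Real.sqrt (sumSq fun i => x i) = 1 := by
    rw [← hx, EuclideanSpace.norm_eq]; rfl
  calc sumSq (fun i => x i) = Real.sqrt (sumSq fun i => x i) ^ 2 :=
        (Real.sq_sqrt (sumSq_nonneg _)).symm
    _ = 1 := by rw [h]; norm_num

lemma sumSq_kron_le {ι κ : Type*} [Fintype ι] [Fintype κ]
    (X : Matrix ι ι ℂ) (Y : Matrix κ κ ℂ) (dX dY : ℝ) (hdX : 0 ≤ dX)
    (hX : ∀ v, sumSq (X *ᵥ v) ≤ dX * sumSq v) (hY : ∀ v, sumSq (Y *ᵥ v) ≤ dY * sumSq v)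
    (w : ι × κ → ℂ) :
    sumSq (fun P : ι × κ => ∑ Q : ι × κ, X P.1 Q.1 * Y P.2 Q.2 * w Q) ≤
      dX * dY * sumSq w := by
  have key : ∀ P : ι × κ, (∑ Q : ι × κ, X P.1 Q.1 * Y P.2 Q.2 * w Q)
      = (X *ᵥ (fun j => (Y *ᵥ fun l => w (j, l)) P.2)) P.1 := by
    intro P
    rw [Fintype.sum_prod_type]
    simp only [mulVec, dotProduct, Finset.mul_sum]
    exact Finset.sum_congr rfl fun j _ => Finset.sum_congr rfl fun l _ => by ring
  calc sumSq (fun P : ι × κ => ∑ Q : ι × κ, X P.1 Q.1 * Y P.2 Q.2 * w Q)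
      = ∑ k : κ, sumSq (X *ᵥ (fun j => (Y *ᵥ fun l => w (j, l)) k)) := by
        simp only [sumSq, key, Fintype.sum_prod_type]
        exact Finset.sum_comm
    _ ≤ ∑ k : κ, dX * sumSq (fun j => (Y *ᵥ fun l => w (j, l)) k) :=
        Finset.sum_le_sum fun k _ => hX _
    _ = dX * ∑ j : ι, sumSq (Y *ᵥ fun l => w (j, l)) := by
        rw [← Finset.mul_sum]
        congr 1
        simp only [sumSq]
        exact Finset.sum_comm
    _ ≤ dX * ∑ j : ι, dY * sumSq (fun l => w (j, l)) := by
        apply mul_le_mul_of_nonneg_left (Finset.sum_le_sum fun j _ => hY _) hdX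
    _ = dX * dY * sumSq w := by
        rw [← Finset.mul_sum, ← mul_assoc]
        congr 1
        simp only [sumSq, Fintype.sum_prod_type]

/-- Splitting off the first tensor factor. -/
def pairConsEquiv {A B : Type*} (n : ℕ) :
    ((A × B) × ((Fin n → A) × (Fin n → B))) ≃ ((Fin (n+1) → A) × (Fin (n+1) → B)) where
  toFun q := (Fin.cons q.1.1 q.2.1, Fin.cons q.1.2 q.2.2)
  invFun p := ((p.1 0, p.2 0), (Fin.tail p.1, Fin.tail p.2))
  left_inv q := by simp
  right_inv p := by simp [Fin.cons_self_tail]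

lemma tensPow_succ {dA dB : ℕ} (N : Matrix (Fin dA × Fin dB) (Fin dA × Fin dB) ℂ) (n : ℕ)
    (P Q : (Fin dA × Fin dB) × ((Fin n → Fin dA) × (Fin n → Fin dB))) :
    tensPow N (n+1) (pairConsEquiv n P) (pairConsEquiv n Q) =
      N P.1 Q.1 * tensPow N n P.2 Q.2 := by
  simp only [tensPow, pairConsEquiv, Equiv.coe_fn_mk]
  rw [Fin.prod_univ_succ]
  simp

lemma tensPow_sumSq_le {dA dB : ℕ} (N : Matrix (Fin dA × Fin dB) (Fin dA × Fin dB) ℂ)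
    (c : ℝ) (hN : ∀ v, sumSq (N *ᵥ v) ≤ c ^ 2 * sumSq v) :
    ∀ n (w : ((Fin n → Fin dA) × (Fin n → Fin dB)) → ℂ),
      sumSq ((tensPow N n) *ᵥ w) ≤ (c ^ 2) ^ n * sumSq w := by
  intro n
  induction n with
  | zero =>
    intro w
    have hw : (tensPow N 0) *ᵥ w = w := by
      funext p
      rw [mulVec, dotProduct, Finset.sum_eq_single p
        (fun b _ hb => absurd (Subsingleton.elim b p) hb)
        (fun h => absurd (Finset.mem_univ p) h)]
      simp [tensPow]
    rw [hw]; simp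
  | succ n ih =>
    intro w
    set E := pairConsEquiv (A := Fin dA) (B := Fin dB) n with hE
    have hmv : ∀ P, ((tensPow N (n+1)) *ᵥ w) (E P)
        = ∑ Q, N P.1 Q.1 * tensPow N n P.2 Q.2 * w (E Q) := by
      intro P
      rw [mulVec, dotProduct, ← Equiv.sum_comp E (fun q => tensPow N (n+1) (E P) q * w q)]
      exact Finset.sum_congr rfl fun Q _ => by rw [tensPow_succ]
    have h1 : sumSq ((tensPow N (n+1)) *ᵥ w) =
        sumSq (fun P : (Fin dA × Fin dB) × ((Fin n → Fin dA) × (Fin n → Fin dB)) =>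
          ∑ Q, N P.1 Q.1 * tensPow N n P.2 Q.2 * w (E Q)) := by
      simp only [sumSq]
      rw [← Equiv.sum_comp E (fun p => ‖((tensPow N (n+1)) *ᵥ w) p‖ ^ 2)]
      exact Finset.sum_congr rfl fun P _ => by rw [hmv]
    have h2 : sumSq (fun Q => w (E Q)) = sumSq w := by
      simp only [sumSq]
      exact Equiv.sum_comp E (fun p => ‖w p‖ ^ 2)
    rw [h1]
    calc sumSq (fun P : (Fin dA × Fin dB) × ((Fin n → Fin dA) × (Fin n → Fin dB)) =>
          ∑ Q, N P.1 Q.1 * tensPow N n P.2 Q.2 * w (E Q))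
        ≤ c ^ 2 * (c ^ 2) ^ n * sumSq (fun Q => w (E Q)) :=
          sumSq_kron_le N (tensPow N n) (c ^ 2) ((c ^ 2) ^ n) (sq_nonneg c) hN ih _
      _ = (c ^ 2) ^ (n+1) * sumSq w := by rw [h2, ← pow_succ']

/-- The swap of the second components used to relate `M^{⊗n}` with `(M^Γ)^{⊗n}`. -/
def swapEquiv {A B : Type*} : ((A × B) × (A × B)) ≃ ((A × B) × (A × B)) where
  toFun x := ((x.1.1, x.2.2), (x.2.1, x.1.2))
  invFun x := ((x.1.1, x.2.2), (x.2.1, x.1.2))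
  left_inv _ := rfl
  right_inv _ := rfl

lemma dot_expand {ι : Type*} [Fintype ι] (T : Matrix ι ι ℂ) (v : ι → ℂ) :
    star v ⬝ᵥ T *ᵥ v = ∑ x : ι × ι, star (v x.1) * (T x.1 x.2 * v x.2) := by
  rw [Fintype.sum_prod_type]
  simp only [dotProduct, mulVec, Pi.star_apply, Finset.mul_sum]

lemma ptrans_identity {dA dB : ℕ} (M : Matrix (Fin dA × Fin dB) (Fin dA × Fin dB) ℂ) (n : ℕ)
    (a : EuclideanSpace ℂ (Fin n → Fin dA)) (b : EuclideanSpace ℂ (Fin n → Fin dB)) :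
    star (fun p : (Fin n → Fin dA) × (Fin n → Fin dB) => a p.1 * b p.2) ⬝ᵥ
        (tensPow M n).mulVec (fun p : (Fin n → Fin dA) × (Fin n → Fin dB) => a p.1 * b p.2)
      = star (fun p : (Fin n → Fin dA) × (Fin n → Fin dB) =>
            a p.1 * (starRingEnd ℂ) (b p.2)) ⬝ᵥ
        (tensPow (ptrans M) n).mulVec (fun p : (Fin n → Fin dA) × (Fin n → Fin dB) =>
            a p.1 * (starRingEnd ℂ) (b p.2)) := by
  rw [dot_expand, dot_expand]
  apply Fintype.sum_equiv (swapEquiv)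
  intro x
  obtain ⟨⟨f, g⟩, f', g'⟩ := x
  have hT : tensPow (ptrans M) n (f, g') (f', g) = tensPow M n (f, g) (f', g') := rfl
  simp only [swapEquiv, Equiv.coe_fn_mk, hT, star_mul', Complex.star_def, Complex.conj_conj]
  ring

lemma psd_re_nonneg {d : Type*} [Fintype d] (M : Matrix d d ℂ) (h : Mᴴ * M = M) (v : d → ℂ) :
    0 ≤ (star v ⬝ᵥ M *ᵥ v).re := by
  rw [← h, ← mulVec_mulVec, dotProduct_mulVec, ← star_mulVec]
  set w := M *ᵥ v
  rw [dotProduct, Complex.re_sum]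
  apply Finset.sum_nonneg
  intro i _
  simp only [Pi.star_apply, Complex.star_def, Complex.mul_re, Complex.conj_re, Complex.conj_im]
  nlinarith [sq_nonneg (w i).re, sq_nonneg (w i).im]

set_option maxHeartbeats 1000000 in
/-- Theorem: if `‖M^Γ‖ ≤ h_SEP(M)^α` for a projector `M`, then `M`'s channel obeys weak
∞-norm multiplicativity with exponent `α`: `h_SEP(M^{⊗n}) ≤ h_SEP(M)^{αn}`. -/
theorem weak_multiplicativity_of_opNorm_ptrans_le {dA dB : ℕ}
    (M : Matrix (Fin dA × Fin dB) (Fin dA × Fin dB) ℂ)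
    (hM : M.IsHermitian) (hproj : M * M = M)
    (α : ℝ) (hα0 : 0 < α) (hα1 : α ≤ 1)
    (hbound : opNorm (ptrans M) ≤ hSEP M ^ α)
    (n : ℕ) (hn : 1 ≤ n)
    (a : EuclideanSpace ℂ (Fin n → Fin dA)) (b : EuclideanSpace ℂ (Fin n → Fin dB))
    (ha : ‖a‖ = 1) (hb : ‖b‖ = 1) :
    (star (fun p : (Fin n → Fin dA) × (Fin n → Fin dB) => a p.1 * b p.2) ⬝ᵥ
        (tensPow M n).mulVec
          (fun p : (Fin n → Fin dA) × (Fin n → Fin dB) => a p.1 * b p.2)).re ≤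
      hSEP M ^ (α * n) := by
  classical
  -- `dA` and `dB` are positive (otherwise there are no unit vectors).
  rcases Nat.eq_zero_or_pos dA with hA0 | hA
  · exfalso
    subst hA0
    have : a = 0 := (WithLp.ext_iff 2).2 (funext fun x => (x ⟨0, hn⟩).elim0)
    rw [this, norm_zero] at ha
    norm_num at ha
  rcases Nat.eq_zero_or_pos dB with hB0 | hB
  · exfalso
    subst hB0
    have : b = 0 := (WithLp.ext_iff 2).2 (funext fun x => (x ⟨0, hn⟩).elim0)
    rw [this, norm_zero] at hb
    norm_num at hb
  -- `M` is positive semidefinite.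
  have hMpsd : ∀ v : (Fin dA × Fin dB) → ℂ, 0 ≤ (star v ⬝ᵥ M *ᵥ v).re :=
    psd_re_nonneg M (by rw [hM, hproj])
  -- `0 ≤ hSEP M`.
  have hopM : (0:ℝ) ≤ opNorm M := norm_nonneg _
  have hbdd : BddAbove { x : ℝ | ∃ (a : EuclideanSpace ℂ (Fin dA)) (b : EuclideanSpace ℂ (Fin dB)),
      ‖a‖ = 1 ∧ ‖b‖ = 1 ∧
      x = (star (fun p : Fin dA × Fin dB => a p.1 * b p.2) ⬝ᵥ
            M.mulVec (fun p : Fin dA × Fin dB => a p.1 * b p.2)).re } := by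
    refine ⟨opNorm M, ?_⟩
    rintro x ⟨a', b', ha', hb', rfl⟩
    set v : (Fin dA × Fin dB) → ℂ := fun p => a' p.1 * b' p.2 with hv
    have hv1 : sumSq v = 1 := by
      have h1 : sumSq v = sumSq (fun i => a' i) * sumSq (fun j => b' j) :=
        sumSq_prod (fun i => a' i) (fun j => b' j)
      rw [h1, sumSq_of_norm_one a' ha', sumSq_of_norm_one b' hb', mul_one]
    calc (star v ⬝ᵥ M *ᵥ v).re
        ≤ Real.sqrt (sumSq v) * Real.sqrt (sumSq (M *ᵥ v)) := re_dot_le _ _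
      _ = Real.sqrt (sumSq (M *ᵥ v)) := by rw [hv1, Real.sqrt_one, one_mul]
      _ ≤ Real.sqrt (opNorm M ^ 2 * 1) := Real.sqrt_le_sqrt (by simpa [hv1] using sumSq_mulVec_le M v)
      _ = opNorm M := by rw [mul_one, Real.sqrt_sq hopM]
  have h0 : 0 ≤ hSEP M := by
    set a₀ : EuclideanSpace ℂ (Fin dA) := EuclideanSpace.single ⟨0, hA⟩ 1 with ha₀
    set b₀ : EuclideanSpace ℂ (Fin dB) := EuclideanSpace.single ⟨0, hB⟩ 1 with hb₀
    have hna : ‖a₀‖ = 1 := by rw [ha₀, EuclideanSpace.norm_single, norm_one]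
    have hnb : ‖b₀‖ = 1 := by rw [hb₀, EuclideanSpace.norm_single, norm_one]
    refine le_trans (hMpsd (fun p => a₀ p.1 * b₀ p.2)) ?_
    exact le_csSup hbdd ⟨a₀, b₀, hna, hnb, rfl⟩
  -- Pass to the partial transpose.
  rw [ptrans_identity M n a b]
  set c := opNorm (ptrans M) with hc'
  have hc : (0:ℝ) ≤ c := norm_nonneg _
  set v' : ((Fin n → Fin dA) × (Fin n → Fin dB)) → ℂ :=
    fun p => a p.1 * (starRingEnd ℂ) (b p.2) with hv'
  have hsv' : sumSq v' = 1 := by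
    have h1 : sumSq v' = sumSq (fun f => a f) * sumSq (fun g => (starRingEnd ℂ) (b g)) :=
      sumSq_prod (fun f => a f) (fun g => (starRingEnd ℂ) (b g))
    have h2 : sumSq (fun g => (starRingEnd ℂ) (b g)) = sumSq (fun g => b g) := by
      simp [sumSq]
    rw [h1, h2, sumSq_of_norm_one a ha, sumSq_of_norm_one b hb, mul_one]
  have hkey := tensPow_sumSq_le (ptrans M) c (fun v => sumSq_mulVec_le _ v) n v'
  calc (star v' ⬝ᵥ (tensPow (ptrans M) n).mulVec v').re
      ≤ Real.sqrt (sumSq v') * Real.sqrt (sumSq ((tensPow (ptrans M) n) *ᵥ v')) := re_dot_le _ _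
    _ = Real.sqrt (sumSq ((tensPow (ptrans M) n) *ᵥ v')) := by rw [hsv', Real.sqrt_one, one_mul]
    _ ≤ Real.sqrt ((c ^ 2) ^ n * 1) := Real.sqrt_le_sqrt (by simpa [hsv'] using hkey)
    _ = c ^ n := by
        rw [mul_one, show (c ^ 2) ^ n = (c ^ n) ^ 2 by ring, Real.sqrt_sq (pow_nonneg hc n)]
    _ ≤ (hSEP M ^ α) ^ n := pow_le_pow_left₀ hc hbound n
    _ = hSEP M ^ (α * n) := by
        rw [← Real.rpow_natCast (hSEP M ^ α) n, ← Real.rpow_mul h0]
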